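/- Let f : ℝ^d → ℝ be C², let x* ∈ [0,1]^d be the unique global minimizer of f over [0,1]^d, and assume the Hessian of f at x* (the matrix of second partial derivatives) is positive definite. Then there exists R > 0 such that for every r ∈ (0, R) there exist δ > 0, L > 0, and a line segment G ⊆ B(x*, r) ∩ [0,1]^d of length δ such that |f(x) − f(y)| ≥ L ‖x − y‖₂ for all x, y ∈ G, and f(x) > f(x*) for all x ∈ G. Moreover one may take δ = r/4 and L = λ_min r / 8, where λ_min is the smallest eigenvalue of the Hessian of f at x*. -/

import Mathlib

open Set Metric

/-- The cube `[0,1]^d` inside `EuclideanSpace ℝ (Fin d)`. -/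
def ecube (d : ℕ) : Set (EuclideanSpace ℝ (Fin d)) := {x | ∀ i, x i ∈ Icc (0 : ℝ) 1}

section aux
open Matrix

lemma herm_vecMul {n : Type*} [Fintype n] [DecidableEq n] {H : Matrix n n ℝ}
    (hH : H.IsHermitian) (v : n → ℝ) : v ᵥ* H = H *ᵥ v := by
  have ht : Hᵀ = H := by
    rw [← conjTranspose_eq_transpose_of_trivial]; exact hH.eq
  nth_rewrite 1 [← ht]; exact vecMul_transpose H v

lemma key_inner {n : Type*} [Fintype n] [DecidableEq n] {H : Matrix n n ℝ} (hH : H.IsHermitian)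
    (x : EuclideanSpace ℝ n) (j : n) :
    (inner ℝ (hH.eigenvectorBasis j) (WithLp.toLp 2 (H *ᵥ ⇑x : n → ℝ) : EuclideanSpace ℝ n) : ℝ) =
      hH.eigenvalues j * inner (𝕜 := ℝ) (hH.eigenvectorBasis j) x := by
  calc (inner ℝ (hH.eigenvectorBasis j) (WithLp.toLp 2 (H *ᵥ ⇑x : n → ℝ) : EuclideanSpace ℝ n) : ℝ)
      = ⇑(hH.eigenvectorBasis j) ⬝ᵥ (H *ᵥ ⇑x) := by
        simp only [PiLp.inner_apply, RCLike.inner_apply, conj_trivial]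
        rw [dotProduct]; exact Finset.sum_congr rfl fun _ _ => mul_comm _ _
    _ = (⇑(hH.eigenvectorBasis j) ᵥ* H) ⬝ᵥ ⇑x := by rw [dotProduct_mulVec]
    _ = (hH.eigenvalues j • ⇑(hH.eigenvectorBasis j)) ⬝ᵥ ⇑x := by
        rw [herm_vecMul hH, hH.mulVec_eigenvectorBasis]
    _ = hH.eigenvalues j * inner (𝕜 := ℝ) (hH.eigenvectorBasis j) x := by
        rw [smul_dotProduct]
        simp only [PiLp.inner_apply, RCLike.inner_apply, conj_trivial, smul_eq_mul]
        rw [dotProduct]; congr 1; exact Finset.sum_congr rfl fun _ _ => mul_comm _ _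

lemma quad_lower {n : Type*} [Fintype n] [DecidableEq n] [Nonempty n] {H : Matrix n n ℝ}
    (hH : H.IsHermitian) (x : EuclideanSpace ℝ n) :
    (⨅ i, hH.eigenvalues i) * ‖x‖ ^ 2 ≤ inner (𝕜 := ℝ) x (WithLp.toLp 2 (H *ᵥ ⇑x : n → ℝ) : EuclideanSpace ℝ n) := by
  set b := hH.eigenvectorBasis
  have h1 := b.sum_inner_mul_inner x (WithLp.toLp 2 (H *ᵥ ⇑x : n → ℝ) : EuclideanSpace ℝ n)
  have h2 := b.sum_inner_mul_inner x x
  rw [real_inner_self_eq_norm_sq] at h2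
  have hm : ∀ j, (⨅ i, hH.eigenvalues i) ≤ hH.eigenvalues j := fun j =>
    ciInf_le (Set.Finite.bddBelow (Set.finite_range _)) j
  calc (⨅ i, hH.eigenvalues i) * ‖x‖ ^ 2
      = ∑ j, (⨅ i, hH.eigenvalues i) * (inner (𝕜 := ℝ) x (b j) * inner (𝕜 := ℝ) (b j) x) := by
        rw [← Finset.mul_sum, h2]
    _ ≤ ∑ j, hH.eigenvalues j * (inner (𝕜 := ℝ) x (b j) * inner (𝕜 := ℝ) (b j) x) := by
        apply Finset.sum_le_sum
        intro j _
        have hnn : 0 ≤ inner (𝕜 := ℝ) x (b j) * inner (𝕜 := ℝ) (b j) x := by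
          rw [real_inner_comm x (b j)]; exact mul_self_nonneg _
        exact mul_le_mul_of_nonneg_right (hm j) hnn
    _ = ∑ j, inner (𝕜 := ℝ) x (b j) * inner (𝕜 := ℝ) (b j) (WithLp.toLp 2 (H *ᵥ ⇑x : n → ℝ) : EuclideanSpace ℝ n) := by
        apply Finset.sum_congr rfl
        intro j _
        rw [key_inner hH x j]; ring
    _ = inner (𝕜 := ℝ) x (WithLp.toLp 2 (H *ᵥ ⇑x : n → ℝ) : EuclideanSpace ℝ n) := h1

lemma bilin_eq_inner {d : ℕ} (B : EuclideanSpace ℝ (Fin d) →L[ℝ] EuclideanSpace ℝ (Fin d) →L[ℝ] ℝ)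
    (H : Matrix (Fin d) (Fin d) ℝ)
    (hH : ∀ i j, H i j = B (EuclideanSpace.single i 1) (EuclideanSpace.single j 1))
    (e : EuclideanSpace ℝ (Fin d)) :
    B e e = inner (𝕜 := ℝ) e (WithLp.toLp 2 (H *ᵥ ⇑e : Fin d → ℝ) : EuclideanSpace ℝ (Fin d)) := by
  have he : e = ∑ i, e i • EuclideanSpace.single i (1:ℝ) := by
    conv_lhs => rw [← (EuclideanSpace.basisFun (Fin d) ℝ).sum_repr e]
    apply Finset.sum_congr rfl
    intro i _
    rw [EuclideanSpace.basisFun_repr, EuclideanSpace.basisFun_apply]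
  have hrow : ∀ u, B u e = ∑ j, e j * B u (EuclideanSpace.single j 1) := by
    intro u
    conv_lhs => rw [he]
    rw [map_sum]
    exact Finset.sum_congr rfl fun j _ => by rw [_root_.map_smul, smul_eq_mul]
  calc B e e
      = ∑ i, ∑ j, e i * (e j * B (EuclideanSpace.single i 1) (EuclideanSpace.single j 1)) := by
        nth_rewrite 1 [he]
        rw [map_sum, ContinuousLinearMap.sum_apply]
        apply Finset.sum_congr rfl
        intro i _
        rw [_root_.map_smul, ContinuousLinearMap.smul_apply, smul_eq_mul, hrow, Finset.mul_sum]
    _ = inner (𝕜 := ℝ) e (WithLp.toLp 2 (H *ᵥ ⇑e : Fin d → ℝ) : EuclideanSpace ℝ (Fin d)) := by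
        simp only [PiLp.inner_apply, RCLike.inner_apply, conj_trivial]
        apply Finset.sum_congr rfl
        intro i _
        have hai : (H *ᵥ ⇑e : Fin d → ℝ) i = ∑ j, H i j * e j := rfl
        rw [hai, Finset.sum_mul]
        apply Finset.sum_congr rfl
        intro j _
        rw [hH i j]; ring

end aux

set_option maxHeartbeats 1000000 in
/-- near the unique global minimizer `x*` of a `C²` function `f` on
`[0,1]^d` with positive definite Hessian, for every small enough radius `r` there is a
line segment `G ⊆ B(x*, r) ∩ [0,1]^d` of length `r/4` on which
`|f x − f y| ≥ (λ_min r / 8) ‖x − y‖₂` and `f > f(x*)`. -/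
theorem segment_near_nondegenerate_minimizer (d : ℕ) (hd : 1 ≤ d)
    (f : EuclideanSpace ℝ (Fin d) → ℝ) (hf : ContDiff ℝ 2 f)
    (xstar : EuclideanSpace ℝ (Fin d)) (hxK : xstar ∈ ecube d)
    (hmin : ∀ x ∈ ecube d, f xstar ≤ f x)
    (huniq : ∀ x ∈ ecube d, f x = f xstar → x = xstar)
    (H : Matrix (Fin d) (Fin d) ℝ)
    (hH : ∀ i j, H i j = iteratedFDeriv ℝ 2 f xstar
      ![EuclideanSpace.single i 1, EuclideanSpace.single j 1])
    (hPD : H.PosDef) :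
    ∃ R > (0 : ℝ), ∀ r : ℝ, 0 < r → r < R →
      ∃ u v : EuclideanSpace ℝ (Fin d),
        segment ℝ u v ⊆ ball xstar r ∩ ecube d ∧
        dist u v = r / 4 ∧
        (∀ x ∈ segment ℝ u v, ∀ y ∈ segment ℝ u v,
          ((⨅ i, hPD.1.eigenvalues i) * r / 8) * ‖x - y‖ ≤ |f x - f y|) ∧
        (∀ x ∈ segment ℝ u v, f xstar < f x) := by
  haveI : Nonempty (Fin d) := Fin.pos_iff_nonempty.mp hd
  have hd0 : (1:ℝ) ≤ (d:ℝ) := by exact_mod_cast hd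
  have hsd : (1:ℝ) ≤ Real.sqrt d := Real.one_le_sqrt.mpr hd0
  have hsd0 : (0:ℝ) < Real.sqrt d := lt_of_lt_of_le one_pos hsd
  set m : ℝ := ⨅ i, hPD.1.eigenvalues i with hm_def
  -- m is positive
  have hm : 0 < m := by
    obtain ⟨j, hj⟩ := Finite.exists_min (hPD.1.eigenvalues)
    exact lt_of_lt_of_le (hPD.eigenvalues_pos j) (le_ciInf hj)
  -- the direction e
  set s : Fin d → ℝ := fun i => if xstar i ≤ 1/2 then 1 else -1 with hs_def
  set e : EuclideanSpace ℝ (Fin d) :=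
    (WithLp.equiv 2 (Fin d → ℝ)).symm (fun i => s i / Real.sqrt d) with he_def
  have he_apply : ∀ i, e i = s i / Real.sqrt d := fun i => rfl
  have hs_one : ∀ i, xstar i ≤ 1/2 → s i = 1 := fun i h => if_pos h
  have hs_neg : ∀ i, ¬ (xstar i ≤ 1/2) → s i = -1 := fun i h => if_neg h
  have hs_sq : ∀ i, s i * s i = 1 := by
    intro i
    by_cases h : xstar i ≤ 1/2
    · rw [hs_one i h]; norm_num
    · rw [hs_neg i h]; norm_num
  have hsum : ∑ i, e i * e i = 1 := by
    have : ∀ i, e i * e i = 1 / d := by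
      intro i
      rw [he_apply, div_mul_div_comm, hs_sq, Real.mul_self_sqrt (le_trans zero_le_one hd0)]
    rw [Finset.sum_congr rfl fun i _ => this i]
    rw [Finset.sum_const, Finset.card_univ, Fintype.card_fin, nsmul_eq_mul]
    field_simp
  have hne : ‖e‖ = 1 := by
    rw [EuclideanSpace.norm_eq]
    have : ∀ i, ‖e i‖ ^ 2 = e i * e i := fun i => by
      rw [Real.norm_eq_abs, sq_abs, sq]
    rw [Finset.sum_congr rfl fun i _ => this i, hsum, Real.sqrt_one]
  -- the bilinear form
  set B : EuclideanSpace ℝ (Fin d) →L[ℝ] EuclideanSpace ℝ (Fin d) →L[ℝ] ℝ :=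
    fderiv ℝ (fderiv ℝ f) xstar with hB_def
  have hH' : ∀ i j, H i j = B (EuclideanSpace.single i 1) (EuclideanSpace.single j 1) := by
    intro i j
    rw [hH i j, iteratedFDeriv_two_apply]
    simp [Matrix.cons_val_zero, Matrix.cons_val_one, Matrix.head_cons, hB_def]
  have hBe : m ≤ B e e := by
    have h1 := quad_lower hPD.1 e
    rw [hne, one_pow, mul_one] at h1
    rw [bilin_eq_inner B H hH' e]
    exact h1
  -- continuity of the second derivative
  have hdf : Differentiable ℝ f := hf.differentiable (by norm_num)
  have hdf2 : Differentiable ℝ (fderiv ℝ f) :=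
    (hf.fderiv_right (m := 1) (by norm_num)).differentiable (by norm_num)
  have hcont : Continuous fun x => fderiv ℝ (fderiv ℝ f) x :=
    (hf.fderiv_right (m := 1) (by norm_num)).continuous_fderiv (by norm_num)
  obtain ⟨ρ, hρ, hball⟩ := (Metric.continuous_iff (β := EuclideanSpace ℝ (Fin d) →L[ℝ] EuclideanSpace ℝ (Fin d) →L[ℝ] ℝ)).mp hcont xstar (m/2) (half_pos hm)
  have hF2 : ∀ x : EuclideanSpace ℝ (Fin d), dist x xstar < ρ →
      m/2 ≤ fderiv ℝ (fderiv ℝ f) x e e := by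
    intro x hx
    have h1 := hball x hx
    replace h1 : ‖fderiv ℝ (fderiv ℝ f) x - B‖ < m / 2 := lt_of_eq_of_lt (dist_eq_norm (fderiv ℝ (fderiv ℝ f) x) B).symm h1
    have h2 : |(fderiv ℝ (fderiv ℝ f) x - B) e e| ≤ ‖fderiv ℝ (fderiv ℝ f) x - B‖ := by
      calc |(fderiv ℝ (fderiv ℝ f) x - B) e e| = ‖(fderiv ℝ (fderiv ℝ f) x - B) e e‖ := rfl
        _ ≤ ‖(fderiv ℝ (fderiv ℝ f) x - B) e‖ * ‖e‖ := ContinuousLinearMap.le_opNorm _ e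
        _ ≤ (‖fderiv ℝ (fderiv ℝ f) x - B‖ * ‖e‖) * ‖e‖ :=
            mul_le_mul_of_nonneg_right (ContinuousLinearMap.le_opNorm _ e) (norm_nonneg e)
        _ = ‖fderiv ℝ (fderiv ℝ f) x - B‖ := by rw [hne]; ring
    have h3 : (fderiv ℝ (fderiv ℝ f) x - B) e e = fderiv ℝ (fderiv ℝ f) x e e - B e e := by
      simp [ContinuousLinearMap.sub_apply]
    rw [h3] at h2
    have := abs_le.mp (le_trans h2 (le_of_lt h1))
    linarith [hBe, this.1]
  -- the parametrized line
  set L : ℝ → EuclideanSpace ℝ (Fin d) := fun t => xstar + t • e with hL_def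
  have hL : ∀ t, HasDerivAt L e t := by
    intro t
    have : HasDerivAt (fun t : ℝ => t • e) ((1:ℝ) • e) t := (hasDerivAt_id t).smul_const e
    exact (by simpa using this : HasDerivAt (fun t : ℝ => t • e) e t).const_add xstar
  have hLd : ∀ t, dist (L t) xstar = |t| := by
    intro t
    rw [dist_eq_norm]
    have : L t - xstar = t • e := by rw [hL_def]; module
    rw [this, norm_smul, hne, mul_one, Real.norm_eq_abs]
  have hg : ∀ t, HasDerivAt (fun t => f (L t)) (fderiv ℝ f (L t) e) t := fun t =>
    (hdf (L t)).hasFDerivAt.comp_hasDerivAt t (hL t)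
  set g1 : ℝ → ℝ := fun t => fderiv ℝ f (L t) e with hg1_def
  have hg1 : ∀ t, HasDerivAt g1 (fderiv ℝ (fderiv ℝ f) (L t) e e) t := by
    intro t
    have h1 : HasDerivAt (fun t => fderiv ℝ f (L t)) (fderiv ℝ (fderiv ℝ f) (L t) e) t :=
      (hdf2 (L t)).hasFDerivAt.comp_hasDerivAt t (hL t)
    have := h1.clm_apply (hasDerivAt_const t e)
    simpa using this
  -- cube membership
  have hcube : ∀ t ∈ Icc (0:ℝ) (1/2 : ℝ), L t ∈ ecube d := by
    intro t ht i
    have hLi : L t i = xstar i + t * (s i / Real.sqrt d) := by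
      rw [hL_def]; rfl
    have htd0 : 0 ≤ t / Real.sqrt d := div_nonneg ht.1 (le_of_lt hsd0)
    have htd1 : t / Real.sqrt d ≤ 1/2 := le_trans (div_le_self ht.1 hsd) ht.2
    have hx0 := (hxK i).1
    have hx1 := (hxK i).2
    rw [hLi]
    by_cases h : xstar i ≤ 1/2
    · rw [hs_one i h]
      constructor
      · have : 0 ≤ t * (1 / Real.sqrt d) :=
          mul_nonneg ht.1 (by positivity)
        linarith
      · have : t * (1 / Real.sqrt d) = t / Real.sqrt d := by ring
        rw [this]; linarith
    · rw [hs_neg i h]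
      push_neg at h
      have heq : t * (-1 / Real.sqrt d) = -(t / Real.sqrt d) := by ring
      rw [heq]
      constructor
      · linarith
      · linarith
  have hL0 : L 0 = xstar := by rw [hL_def]; simp
  -- the one-sided derivative at 0 is nonnegative
  have hg10 : 0 ≤ g1 0 := by
    have htend : Filter.Tendsto (slope (fun t => f (L t)) 0) (nhdsWithin 0 (Ioi 0)) (nhds (g1 0)) := by
      have := hasDerivAt_iff_tendsto_slope.mp (hg 0)
      rw [hg1_def]
      exact this.mono_left (nhdsWithin_mono 0 (fun x hx => ne_of_gt hx))
    refine ge_of_tendsto htend ?_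
    filter_upwards [Ioo_mem_nhdsGT_of_mem (show (0:ℝ) ∈ Ico 0 (1/2) by constructor <;> norm_num)]
      with t ht
    rw [slope_def_field]
    apply div_nonneg _ (by linarith [ht.1])
    have h1 : f (L t) ≥ f xstar := hmin _ (hcube t ⟨le_of_lt ht.1, le_of_lt ht.2⟩)
    show 0 ≤ f (L t) - f (L 0)
    rw [hL0]
    linarith
  -- choose R
  refine ⟨min ρ (1/2), lt_min hρ (by norm_num), ?_⟩
  intro r hr hrR
  have hrρ : r < ρ := lt_of_lt_of_le hrR (min_le_left _ _)
  have hr2 : r < 1/2 := lt_of_lt_of_le hrR (min_le_right _ _)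
  have hparam : ∀ x ∈ segment ℝ (L (r/2)) (L (3*r/4)), ∃ t, t ∈ Icc (r/2) (3*r/4) ∧ x = L t := by
    rintro x ⟨a, b, ha, hb, hab, rfl⟩
    have hb' : b = 1 - a := by linarith
    subst hb'
    refine ⟨a*(r/2)+(1-a)*(3*r/4), ⟨?_, ?_⟩, ?_⟩
    · nlinarith
    · nlinarith
    · simp only [hL_def]; module
  have hdiff : ∀ t1 t2 : ℝ, L t1 - L t2 = (t1 - t2) • e := by
    intro t1 t2; simp only [hL_def]; module
  have hnorm : ∀ t1 t2 : ℝ, ‖L t1 - L t2‖ = |t1 - t2| := by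
    intro t1 t2; rw [hdiff, norm_smul, hne, mul_one, Real.norm_eq_abs]
  have hd1 : ∀ τ ∈ Ioo (0:ℝ) (3*r/4), m/2 ≤ deriv g1 τ := by
    intro τ hτ
    rw [(hg1 τ).deriv]
    apply hF2
    rw [hLd, abs_of_nonneg (le_of_lt hτ.1)]
    have := hτ.2
    linarith
  have hmvt1 := (convex_Icc (0:ℝ) (3*r/4)).mul_sub_le_image_sub_of_le_deriv
    (Continuous.continuousOn (continuous_iff_continuousAt.mpr fun t => (hg1 t).continuousAt))
    (fun t _ => (hg1 t).differentiableAt.differentiableWithinAt)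
    (by rw [interior_Icc]; exact hd1)
  have hg1t : ∀ t ∈ Ioo (r/4) (3*r/4), m*r/8 ≤ g1 t := by
    intro t ht
    have h1 := hmvt1 0 ⟨le_rfl, by linarith [ht.1]⟩ t ⟨by linarith [ht.1], le_of_lt ht.2⟩
      (by linarith [ht.1])
    have h3 : m/2 * (r/4) ≤ m/2 * t :=
      mul_le_mul_of_nonneg_left (le_of_lt ht.1) (by linarith)
    have h4 : m*r/8 = m/2 * (r/4) := by ring
    linarith [hg10, h1, h3, h4]
  have hd0 : ∀ t ∈ Ioo (r/4) (3*r/4), m*r/8 ≤ deriv (fun t => f (L t)) t := by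
    intro t ht
    rw [(hg t).deriv]
    exact hg1t t ht
  have hmvt2 := (convex_Icc (r/4) (3*r/4)).mul_sub_le_image_sub_of_le_deriv
    (Continuous.continuousOn (continuous_iff_continuousAt.mpr fun t => (hg t).continuousAt))
    (fun t _ => (hg t).differentiableAt.differentiableWithinAt)
    (by rw [interior_Icc]; exact hd0)
  have hmvt2' : ∀ t1 ∈ Icc (r/4) (3*r/4), ∀ t2 ∈ Icc (r/4) (3*r/4), t1 ≤ t2 →
      m*r/8 * (t2 - t1) ≤ f (L t2) - f (L t1) := fun t1 h1 t2 h2 h12 => hmvt2 t1 h1 t2 h2 h12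
  refine ⟨L (r/2), L (3*r/4), ?_, ?_, ?_, ?_⟩
  · -- segment inside ball ∩ cube
    intro x hx
    obtain ⟨t, ht, rfl⟩ := hparam x hx
    constructor
    · rw [mem_ball, hLd, abs_of_nonneg (by linarith [ht.1] : (0:ℝ) ≤ t)]
      linarith [ht.2]
    · exact hcube t ⟨by linarith [ht.1], by linarith [ht.2]⟩
  · -- distance
    rw [dist_eq_norm, hnorm]
    rw [abs_of_nonpos (by linarith)]
    ring
  · -- Lipschitz from below
    intro x hx y hy
    obtain ⟨t1, ht1, rfl⟩ := hparam x hx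
    obtain ⟨t2, ht2, rfl⟩ := hparam y hy
    rw [hnorm]
    rcases le_total t1 t2 with h12 | h21
    · rw [abs_of_nonpos (by linarith)]
      have h := hmvt2' t1 ⟨by linarith [ht1.1], ht1.2⟩ t2 ⟨by linarith [ht2.1], ht2.2⟩ h12
      have habs := le_abs_self (f (L t2) - f (L t1))
      rw [abs_sub_comm] at habs
      have : -(t1 - t2) = t2 - t1 := by ring
      rw [this]
      linarith
    · rw [abs_of_nonneg (by linarith)]
      have h := hmvt2' t2 ⟨by linarith [ht2.1], ht2.2⟩ t1 ⟨by linarith [ht1.1], ht1.2⟩ h21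
      have habs := le_abs_self (f (L t1) - f (L t2))
      linarith
  · -- strictly above the minimum
    intro x hx
    obtain ⟨t, ht, rfl⟩ := hparam x hx
    have hc := hmvt2' (r/4) ⟨le_rfl, by linarith [ht.1, ht.2]⟩ t ⟨by linarith [ht.1], ht.2⟩
      (by linarith [ht.1])
    have h2 : f xstar ≤ f (L (r/4)) := hmin _ (hcube (r/4) ⟨by linarith, by linarith⟩)
    have h3 : 0 < m*r/8 * (t - r/4) := by
      apply mul_pos
      · positivity
      · linarith [ht.1]
    linarith
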